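/- Suppose Hypothesis (H) holds. Then for every n ≥ 1, the joint distribution of (X_1,…,X_n) dominates a multiple of the product measure: for every measurable A ⊆ 𝕏^n, ℙ((X_1,…,X_n) ∈ A) ≥ (∏_{i=1}^{n−1}(1 − a_i)) · ν^{⊗n}(A), where ν^{⊗n} denotes the n-fold product of ν. -/

import Mathlib

open MeasureTheory ProbabilityTheory ENNReal

/-- A sequence `X` is exchangeable under `P`: every finite prefix has a
permutation-invariant joint distribution. -/
def Exchangeable {Ω 𝕏 : Type*} [MeasurableSpace Ω] [MeasurableSpace 𝕏]
    (P : Measure Ω) (X : ℕ → Ω → 𝕏) : Prop :=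
  ∀ (n : ℕ) (σ : Equiv.Perm (Fin n)),
    P.map (fun ω (i : Fin n) => X (σ i) ω) = P.map (fun ω (i : Fin n) => X i ω)

/-- The predictive distributions of `X` are
`ℙ(X_{n+1} ∈ ·  | X_1,…,X_n) = (1 - a_n) ν + (a_n/n) ∑_{i=1}^n R_{X_i}` a.s.,
expressed in disintegrated form: for every measurable `B ⊆ 𝕏` and every
measurable set `A` of trajectories of the first `n` coordinates. -/
def PredEq {Ω 𝕏 : Type*} [MeasurableSpace Ω] [MeasurableSpace 𝕏]
    (P : Measure Ω) (X : ℕ → Ω → 𝕏) (ν : Measure 𝕏) (R : Kernel 𝕏 𝕏) (a : ℕ → ℝ) : Prop :=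
  ∀ n : ℕ, 1 ≤ n → ∀ B : Set 𝕏, MeasurableSet B → ∀ A : Set (Fin n → 𝕏), MeasurableSet A →
    P {ω | (fun i : Fin n => X i ω) ∈ A ∧ X n ω ∈ B} =
      ∫⁻ x in A, (ENNReal.ofReal (1 - a n) * ν B
          + (ENNReal.ofReal (a n) / (n : ℝ≥0∞)) * ∑ i : Fin n, R (x i) B)
        ∂(P.map (fun ω (i : Fin n) => X i ω))

/-- Hypothesis (H): `X` is exchangeable with marginal distribution `ν`, `R` is a
probability kernel, and the predictive distributions are as in `PredEq` with
constants `a n ∈ (0,1)`. -/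
structure HypH {Ω 𝕏 : Type*} [MeasurableSpace Ω] [MeasurableSpace 𝕏]
    (P : Measure Ω) (X : ℕ → Ω → 𝕏) (ν : Measure 𝕏) (R : Kernel 𝕏 𝕏) (a : ℕ → ℝ) : Prop where
  probP : IsProbabilityMeasure P
  probν : IsProbabilityMeasure ν
  markov : IsMarkovKernel R
  meas : ∀ n, Measurable (X n)
  exch : Exchangeable P X
  marginal : ∀ n, P.map (X n) = ν
  a_mem : ∀ n, 1 ≤ n → a n ∈ Set.Ioo (0 : ℝ) 1
  pred : PredEq P X ν R a

/-- `X` is a measure-valued Pólya urn sequence with parameters `(θ, ν, R)`. -/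
def IsMVPS {Ω 𝕏 : Type*} [MeasurableSpace Ω] [MeasurableSpace 𝕏]
    (P : Measure Ω) (X : ℕ → Ω → 𝕏) (θ : ℝ) (ν : Measure 𝕏) (R : Kernel 𝕏 𝕏) : Prop :=
  0 < θ ∧ P.map (X 0) = ν ∧
  ∀ n : ℕ, 1 ≤ n → ∀ B : Set 𝕏, MeasurableSet B → ∀ A : Set (Fin n → 𝕏), MeasurableSet A →
    P {ω | (fun i : Fin n => X i ω) ∈ A ∧ X n ω ∈ B} =
      ∫⁻ x in A, ((ENNReal.ofReal θ * ν B + ∑ i : Fin n, R (x i) B)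
          / (ENNReal.ofReal θ + (n : ℝ≥0∞)))
        ∂(P.map (fun ω (i : Fin n) => X i ω))


section Aux

variable {𝕏 : Type*} [MeasurableSpace 𝕏]

/-- The predictive kernel at step `n`. -/
noncomputable def predKernel (ν : Measure 𝕏) (R : Kernel 𝕏 𝕏) (a : ℕ → ℝ) (n : ℕ) :
    Kernel (Fin n → 𝕏) 𝕏 :=
  ⟨fun x => ENNReal.ofReal (1 - a n) • ν
      + (ENNReal.ofReal (a n) / (n : ℝ≥0∞)) • ∑ i : Fin n, R (x i),
   by
    apply Measure.measurable_of_measurable_coe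
    intro s hs
    simp only [Measure.add_apply, Measure.smul_apply, smul_eq_mul,
      Measure.finset_sum_apply]
    refine Measurable.add measurable_const ?_
    exact (Finset.measurable_sum _ fun i _ =>
      (R.measurable_coe hs).comp (measurable_pi_apply i)).const_mul _⟩

lemma predKernel_apply (ν : Measure 𝕏) (R : Kernel 𝕏 𝕏) (a : ℕ → ℝ) (n : ℕ)
    (x : Fin n → 𝕏) (B : Set 𝕏) :
    predKernel ν R a n x B = ENNReal.ofReal (1 - a n) * ν B
      + (ENNReal.ofReal (a n) / (n : ℝ≥0∞)) * ∑ i : Fin n, R (x i) B := by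
  simp [predKernel, Measure.finset_sum_apply]

lemma predKernel_markov (ν : Measure 𝕏) [IsProbabilityMeasure ν] (R : Kernel 𝕏 𝕏)
    [IsMarkovKernel R] (a : ℕ → ℝ) (n : ℕ) (hn : 1 ≤ n) (ha : a n ∈ Set.Ioo (0:ℝ) 1) :
    IsMarkovKernel (predKernel ν R a n) := by
  constructor
  intro x
  constructor
  rw [predKernel_apply]
  simp only [measure_univ, mul_one, Finset.sum_const, Finset.card_univ, Fintype.card_fin,
    nsmul_eq_mul]
  rw [ENNReal.div_mul_cancel (by exact_mod_cast Nat.one_le_iff_ne_zero.mp hn) (by simp)]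
  rw [← ENNReal.ofReal_add (by linarith [ha.2]) (le_of_lt ha.1)]
  norm_num

/-- The "snoc" map from pairs to `Fin (n+1)`-tuples. -/
noncomputable def snocMap (𝕏 : Type*) [MeasurableSpace 𝕏] (n : ℕ) :
    (Fin n → 𝕏) × 𝕏 → (Fin (n + 1) → 𝕏) :=
  fun p => (MeasurableEquiv.piFinSuccAbove (fun _ : Fin (n + 1) => 𝕏) (Fin.last n)).symm
    (p.2, p.1)

lemma measurable_snocMap (n : ℕ) : Measurable (snocMap 𝕏 n) :=
  (MeasurableEquiv.piFinSuccAbove (fun _ : Fin (n + 1) => 𝕏) (Fin.last n)).symm.measurable.comp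
    (measurable_snd.prodMk measurable_fst)

lemma pi_succ_eq (ν : Measure 𝕏) [IsProbabilityMeasure ν] (n : ℕ) :
    Measure.pi (fun _ : Fin (n + 1) => ν)
      = ((Measure.pi (fun _ : Fin n => ν)).prod ν).map (snocMap 𝕏 n) := by
  set e := MeasurableEquiv.piFinSuccAbove (fun _ : Fin (n + 1) => 𝕏) (Fin.last n)
  have h1 := measurePreserving_piFinSuccAbove (fun _ : Fin (n + 1) => ν) (Fin.last n)
  have h2 : (Measure.pi (fun _ : Fin (n + 1) => ν)).map e
      = ν.prod (Measure.pi (fun _ : Fin n => ν)) := h1.map_eq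
  have h3 : ((Measure.pi (fun _ : Fin n => ν)).prod ν).map Prod.swap
      = ν.prod (Measure.pi (fun _ : Fin n => ν)) := Measure.prod_swap
  calc Measure.pi (fun _ : Fin (n + 1) => ν)
      = ((Measure.pi (fun _ : Fin (n + 1) => ν)).map e).map e.symm := by
        rw [Measure.map_map e.symm.measurable e.measurable]
        simp
    _ = (((Measure.pi (fun _ : Fin n => ν)).prod ν).map Prod.swap).map e.symm := by
        rw [h2, h3]
    _ = ((Measure.pi (fun _ : Fin n => ν)).prod ν).map (snocMap 𝕏 n) := by
        rw [Measure.map_map e.symm.measurable measurable_swap]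
        rfl

/-- Identification of the joint law of `(X_0, …, X_n)` as a composition product. -/
lemma step_law {Ω : Type*} [MeasurableSpace Ω] (P : Measure Ω) [IsProbabilityMeasure P]
    (X : ℕ → Ω → 𝕏) (hX : ∀ k, Measurable (X k)) (ν : Measure 𝕏) [IsProbabilityMeasure ν]
    (R : Kernel 𝕏 𝕏) [IsMarkovKernel R] (a : ℕ → ℝ)
    (hpred : PredEq P X ν R a) (n : ℕ) (hn : 1 ≤ n) (ha : a n ∈ Set.Ioo (0:ℝ) 1) :
    P.map (fun ω (i : Fin (n + 1)) => X i ω)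
      = ((P.map (fun ω (i : Fin n) => X i ω)) ⊗ₘ predKernel ν R a n).map (snocMap 𝕏 n) := by
  haveI := predKernel_markov ν R a n hn ha
  set e := MeasurableEquiv.piFinSuccAbove (fun _ : Fin (n + 1) => 𝕏) (Fin.last n) with he
  set μ := P.map (fun ω (i : Fin n) => X i ω) with hμ
  have hF' : Measurable (fun ω (i : Fin (n + 1)) => X i ω) :=
    measurable_pi_lambda _ fun i => hX i
  have hF : Measurable (fun ω (i : Fin n) => X i ω) :=
    measurable_pi_lambda _ fun i => hX i
  haveI : IsProbabilityMeasure μ := Measure.isProbabilityMeasure_map hF.aemeasurable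
  haveI : IsProbabilityMeasure (P.map (fun ω (i : Fin (n + 1)) => X i ω)) :=
    Measure.isProbabilityMeasure_map hF'.aemeasurable
  have key : (P.map (fun ω (i : Fin (n + 1)) => X i ω)).map e
      = (μ ⊗ₘ predKernel ν R a n).map Prod.swap := by
    haveI : IsProbabilityMeasure ((P.map (fun ω (i : Fin (n + 1)) => X i ω)).map e) :=
      Measure.isProbabilityMeasure_map e.measurable.aemeasurable
    haveI : IsProbabilityMeasure ((μ ⊗ₘ predKernel ν R a n).map Prod.swap) :=
      Measure.isProbabilityMeasure_map measurable_swap.aemeasurable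
    refine ext_of_generate_finite _ generateFrom_prod.symm isPiSystem_prod ?_ (by simp)
    rintro s ⟨B, hB, A, hA, rfl⟩
    simp only [Set.mem_setOf_eq] at hB hA
    rw [Measure.map_apply e.measurable (hB.prod hA),
      Measure.map_apply hF' (e.measurable (hB.prod hA)),
      Measure.map_apply measurable_swap (hB.prod hA), Set.preimage_swap_prod,
      Measure.compProd_apply_prod hA hB]
    have hset : (fun ω (i : Fin (n + 1)) => X i ω) ⁻¹' (e ⁻¹' B ×ˢ A)
        = {ω | (fun i : Fin n => X i ω) ∈ A ∧ X n ω ∈ B} := by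
      ext ω
      simp only [Set.mem_preimage, Set.mem_prod, Set.mem_setOf_eq, he,
        MeasurableEquiv.piFinSuccAbove_apply, Fin.insertNthEquiv, Fin.succAbove_last,
        Fin.val_last, Fin.coe_castSucc, Equiv.coe_fn_symm_mk]
      have hrem : ((Fin.last n).removeNth fun i : Fin (n + 1) => X (↑i) ω)
          = fun i : Fin n => X (↑i) ω := by
        funext j
        simp [Fin.removeNth, Fin.succAbove_last]
      rw [hrem]
      tauto
    rw [hset, hpred n hn B hB A hA]
    refine setLIntegral_congr_fun hA (fun x _ => ?_)
    rw [predKernel_apply]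
  calc P.map (fun ω (i : Fin (n + 1)) => X i ω)
      = ((P.map (fun ω (i : Fin (n + 1)) => X i ω)).map e).map e.symm := by
        rw [Measure.map_map e.symm.measurable e.measurable]
        simp
    _ = ((μ ⊗ₘ predKernel ν R a n).map Prod.swap).map e.symm := by rw [key]
    _ = (μ ⊗ₘ predKernel ν R a n).map (snocMap 𝕏 n) := by
        rw [Measure.map_map e.symm.measurable measurable_swap]
        rfl

end Aux

/-- under Hypothesis (H), the joint law of `(X_1,…,X_n)` dominates
`(∏_{i=1}^{n-1} (1 - a_i)) ν^{⊗n}`. -/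
theorem joint_law_dominates_product {Ω 𝕏 : Type*} [MeasurableSpace Ω] [MeasurableSpace 𝕏]
    [StandardBorelSpace 𝕏]
    (P : Measure Ω) (X : ℕ → Ω → 𝕏) (ν : Measure 𝕏) (R : Kernel 𝕏 𝕏) (a : ℕ → ℝ)
    (hH : HypH P X ν R a) :
    ∀ n : ℕ, 1 ≤ n → ∀ A : Set (Fin n → 𝕏), MeasurableSet A →
      (∏ i ∈ Finset.Icc 1 (n - 1), ENNReal.ofReal (1 - a i)) *
          Measure.pi (fun _ : Fin n => ν) A ≤
        P.map (fun ω (i : Fin n) => X i ω) A := by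
  obtain ⟨probP, probν, markov, hX, _, marginal, ha, hpred⟩ := hH
  intro n hn
  induction n, hn using Nat.le_induction with
  | base =>
    intro A hA
    have h0 : Finset.Icc 1 (1 - 1) = (∅ : Finset ℕ) := by decide
    rw [h0, Finset.prod_empty, one_mul]
    have hmap : Measure.pi (fun _ : Fin 1 => ν) = P.map (fun ω (i : Fin 1) => X i ω) := by
      have h1 := (measurePreserving_funUnique (α := Fin 1) ν).symm
        (MeasurableEquiv.funUnique (Fin 1) 𝕏)
      have h2 : ν.map (MeasurableEquiv.funUnique (Fin 1) 𝕏).symm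
          = Measure.pi (fun _ : Fin 1 => ν) := h1.map_eq
      rw [← h2, ← marginal 0,
        Measure.map_map (MeasurableEquiv.funUnique (Fin 1) 𝕏).symm.measurable (hX 0)]
      congr 1
      funext ω
      funext i
      have : i = 0 := Subsingleton.elim _ _
      subst this
      rfl
    rw [hmap]
  | succ n hn ih =>
    intro A hA
    haveI := predKernel_markov ν R a n hn (ha n hn)
    have hF : Measurable (fun ω (i : Fin n) => X i ω) :=
      measurable_pi_lambda _ fun i => hX i
    haveI : IsProbabilityMeasure (P.map (fun ω (i : Fin n) => X i ω)) :=
      Measure.isProbabilityMeasure_map hF.aemeasurable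
    set μ := P.map (fun ω (i : Fin n) => X i ω) with hμ
    set K := predKernel ν R a n with hK
    -- rewrite the constant
    have hprod : ∏ i ∈ Finset.Icc 1 (n + 1 - 1), ENNReal.ofReal (1 - a i)
        = (∏ i ∈ Finset.Icc 1 (n - 1), ENNReal.ofReal (1 - a i))
            * ENNReal.ofReal (1 - a n) := by
      obtain ⟨m, rfl⟩ : ∃ m, n = m + 1 := ⟨n - 1, by omega⟩
      simp only [Nat.add_sub_cancel]
      rw [Finset.prod_Icc_succ_top (by omega)]
    set c := ∏ i ∈ Finset.Icc 1 (n - 1), ENNReal.ofReal (1 - a i) with hc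
    rw [hprod]
    -- the measure inequality from the inductive hypothesis
    have hle : c • Measure.pi (fun _ : Fin n => ν) ≤ μ := by
      rw [Measure.le_iff]
      intro s hs
      simpa [Measure.smul_apply, smul_eq_mul] using ih s hs
    -- the step identity
    rw [step_law P X hX ν R a hpred n hn (ha n hn),
      Measure.map_apply (measurable_snocMap n) hA]
    set S := snocMap 𝕏 n ⁻¹' A with hS
    have hSm : MeasurableSet S := measurable_snocMap n hA
    rw [Measure.compProd_apply hSm]
    have step1 : ∫⁻ x, ENNReal.ofReal (1 - a n) * ν (Prod.mk x ⁻¹' S) ∂μ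
        ≤ ∫⁻ x, K x (Prod.mk x ⁻¹' S) ∂μ := by
      refine lintegral_mono fun x => ?_
      rw [predKernel_apply]
      exact le_add_right le_rfl
    have step2 : ∫⁻ x, ENNReal.ofReal (1 - a n) * ν (Prod.mk x ⁻¹' S)
          ∂(c • Measure.pi (fun _ : Fin n => ν))
        ≤ ∫⁻ x, ENNReal.ofReal (1 - a n) * ν (Prod.mk x ⁻¹' S) ∂μ :=
      lintegral_mono' hle le_rfl
    refine le_trans ?_ (le_trans step2 step1)
    rw [lintegral_smul_measure, lintegral_const_mul' _ _ ENNReal.ofReal_ne_top]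
    have hint : ∫⁻ x, ν (Prod.mk x ⁻¹' S) ∂(Measure.pi (fun _ : Fin n => ν))
        = Measure.pi (fun _ : Fin (n + 1) => ν) A := by
      have h1 : ∫⁻ x, ν (Prod.mk x ⁻¹' S) ∂(Measure.pi (fun _ : Fin n => ν))
          = ((Measure.pi (fun _ : Fin n => ν)) ⊗ₘ Kernel.const _ ν) S := by
        rw [Measure.compProd_apply hSm]
        rfl
      rw [h1, Measure.compProd_const, pi_succ_eq ν n,
        Measure.map_apply (measurable_snocMap n) hA]
    rw [hint]
    exact le_of_eq (by ring)
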